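/- arXiv:2001.04194 — 5 statements merged into one kernel-verified Lean document; each statement's English description precedes it below -/
import Mathlib

section
/- Let K, a₁,...,aₙ be positive integers with K > aᵢ for all i, and let bₕ = e_h(a₁,...,aₙ) be the h-th elementary symmetric polynomial. If 1 ≤ h ≤ n−1 and K ≥ (a₁+⋯+aₙ)/(h+1), then b_{h+1}·K^{n−h−1} ≤ bₕ·K^{n−h}. -/
/-- The `h`-th elementary symmetric polynomial of `a 0, …, a (n-1)`. -/
def esymm (n : ℕ) (a : Fin n → ℕ) (h : ℕ) : ℕ :=
  ∑ t ∈ Finset.powersetCard h (Finset.univ : Finset (Fin n)), ∏ i ∈ t, a i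

lemma esymm_succ_mul (n h : ℕ) (a : Fin n → ℕ) :
    (h + 1) * esymm n a (h + 1)
      = ∑ t ∈ Finset.powersetCard h (Finset.univ : Finset (Fin n)),
          ∑ i ∈ tᶜ, (a i * ∏ j ∈ t, a j) := by
  unfold esymm
  rw [Finset.mul_sum]
  have L : ∀ s ∈ Finset.powersetCard (h+1) (Finset.univ : Finset (Fin n)),
      (h+1) * ∏ i ∈ s, a i = ∑ i ∈ s, (a i * ∏ j ∈ s.erase i, a j) := by
    intro s hs
    rw [Finset.mem_powersetCard] at hs
    have : ∀ i ∈ s, a i * ∏ j ∈ s.erase i, a j = ∏ j ∈ s, a j := fun i hi =>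
      Finset.mul_prod_erase s a hi
    rw [Finset.sum_congr rfl this, Finset.sum_const, hs.2, smul_eq_mul]
  rw [Finset.sum_congr rfl L]
  rw [Finset.sum_sigma', Finset.sum_sigma']
  apply Finset.sum_nbij' (fun p => ⟨p.1.erase p.2, p.2⟩) (fun p => ⟨insert p.2 p.1, p.2⟩)
  · rintro ⟨s, i⟩ hp
    simp only [Finset.mem_sigma, Finset.mem_powersetCard] at hp ⊢
    obtain ⟨⟨_, hc⟩, hi⟩ := hp
    refine ⟨⟨Finset.subset_univ _, ?_⟩, ?_⟩
    · rw [Finset.card_erase_of_mem hi, hc]; rfl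
    · simp [Finset.mem_compl]
  · rintro ⟨t, i⟩ hp
    simp only [Finset.mem_sigma, Finset.mem_powersetCard, Finset.mem_compl] at hp ⊢
    obtain ⟨⟨_, hc⟩, hi⟩ := hp
    exact ⟨⟨Finset.subset_univ _, by rw [Finset.card_insert_of_notMem hi, hc]⟩,
      Finset.mem_insert_self _ _⟩
  · rintro ⟨s, i⟩ hp
    simp only [Finset.mem_sigma] at hp
    simp [Finset.insert_erase hp.2]
  · rintro ⟨t, i⟩ hp
    simp only [Finset.mem_sigma, Finset.mem_compl] at hp
    simp [Finset.erase_insert hp.2]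
  · rintro ⟨s, i⟩ hp
    rfl

/-- If `K > aᵢ` for all `i`, `1 ≤ h ≤ n − 1` and `K ≥ (a₁ + ⋯ + aₙ)/(h+1)`, then
`b_{h+1}·K^{n−h−1} ≤ bₕ·K^{n−h}`, where `bₕ` is the `h`-th elementary symmetric
polynomial of the `aᵢ`. -/
theorem esymm_pow_le (K n : ℕ) (hK : 0 < K) (a : Fin n → ℕ) (ha : ∀ i, 0 < a i)
    (haK : ∀ i, a i < K) (h : ℕ) (h1 : 1 ≤ h) (h2 : h ≤ n - 1)
    (hbig : (K : ℚ) ≥ (∑ i, (a i : ℚ)) / (h + 1)) :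
    esymm n a (h + 1) * K ^ (n - h - 1) ≤ esymm n a h * K ^ (n - h) := by
  have hsum : (∑ i, a i) ≤ (h + 1) * K := by
    have hq : (∑ i, (a i : ℚ)) ≤ ((h : ℚ) + 1) * K := by
      rw [ge_iff_le, div_le_iff₀ (by positivity)] at hbig
      linarith [hbig]
    have : ((∑ i, a i : ℕ) : ℚ) ≤ (((h + 1) * K : ℕ) : ℚ) := by push_cast; linarith
    exact_mod_cast this
  have key : (h + 1) * esymm n a (h + 1) ≤ (∑ i, a i) * esymm n a h := by
    rw [esymm_succ_mul]
    unfold esymm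
    rw [Finset.mul_sum]
    apply Finset.sum_le_sum
    intro t _
    rw [← Finset.sum_mul]
    exact Nat.mul_le_mul_right _ (Finset.sum_le_sum_of_subset (Finset.subset_univ _))
  have hle : esymm n a (h + 1) ≤ K * esymm n a h := by
    refine Nat.le_of_mul_le_mul_left ?_ (Nat.succ_pos h)
    calc (h + 1) * esymm n a (h + 1) ≤ (∑ i, a i) * esymm n a h := key
      _ ≤ (h + 1) * K * esymm n a h := Nat.mul_le_mul_right _ hsum
      _ = (h + 1) * (K * esymm n a h) := by ring
  have hn : n - h = (n - h - 1) + 1 := by omega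
  calc esymm n a (h + 1) * K ^ (n - h - 1) ≤ K * esymm n a h * K ^ (n - h - 1) :=
        Nat.mul_le_mul_right _ hle
    _ = esymm n a h * K ^ (n - h) := by
        conv_rhs => rw [hn, pow_succ]
        ring
end

section
/- Let K, r, s be positive integers with s ≥ 2, r ≥ s, rs < K, and K > r + s. Then (r+s−1)/r · [(K−1)(K−2)⋯(K−(s−1))] / [(K−(r+1))(K−(r+2))⋯(K−(r+s−1))] ≤ (r+s−1)/r · (1 + (8r(s−1)K + s²(s−1)²)/(8K² − 4(2r+s)(s−1)K)), provided the denominator 8K² − 4(2r+s)(s−1)K is positive. -/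
open Finset

private lemma aux_prod_le_one {ι : Type*} (S : Finset ι) (f : ι → ℚ)
    (h0 : ∀ i ∈ S, 0 ≤ f i) (h1 : ∀ i ∈ S, f i ≤ 1) :
    ∏ i ∈ S, (1 - f i) ≤ 1 :=
  Finset.prod_le_one (fun i hi => by linarith [h1 i hi]) (fun i hi => by linarith [h0 i hi])

private lemma aux_lb {ι : Type*} (S : Finset ι) (f : ι → ℚ)
    (h0 : ∀ i ∈ S, 0 ≤ f i) (h1 : ∀ i ∈ S, f i ≤ 1) :
    1 - ∑ i ∈ S, f i ≤ ∏ i ∈ S, (1 - f i) := by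
  induction S using Finset.cons_induction with
  | empty => simp
  | cons a S ha ih =>
    have h0' := fun i hi => h0 i (Finset.mem_cons_of_mem hi)
    have h1' := fun i hi => h1 i (Finset.mem_cons_of_mem hi)
    have hle := aux_prod_le_one S f h0' h1'
    have hge := ih h0' h1'
    have hx0 := h0 a (Finset.mem_cons_self a S)
    have hx1 := h1 a (Finset.mem_cons_self a S)
    rw [Finset.prod_cons, Finset.sum_cons]
    nlinarith [hge, hle, hx0, hx1]

private lemma aux_ub {ι : Type*} (S : Finset ι) (f : ι → ℚ)
    (h0 : ∀ i ∈ S, 0 ≤ f i) (h1 : ∀ i ∈ S, f i ≤ 1) :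
    ∏ i ∈ S, (1 - f i) ≤ 1 - (∑ i ∈ S, f i) + (∑ i ∈ S, f i) ^ 2 / 2 := by
  induction S using Finset.cons_induction with
  | empty => simp
  | cons a S ha ih =>
    have h0' := fun i hi => h0 i (Finset.mem_cons_of_mem hi)
    have h1' := fun i hi => h1 i (Finset.mem_cons_of_mem hi)
    have hub := ih h0' h1'
    have hx0 := h0 a (Finset.mem_cons_self a S)
    have hx1 := h1 a (Finset.mem_cons_self a S)
    have hsum0 : 0 ≤ ∑ i ∈ S, f i := Finset.sum_nonneg h0'
    rw [Finset.prod_cons, Finset.sum_cons]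
    nlinarith [mul_nonneg (by linarith : (0:ℚ) ≤ 1 - f a)
      (by linarith : (0:ℚ) ≤ 1 - (∑ i ∈ S, f i) + (∑ i ∈ S, f i) ^ 2 / 2 - ∏ i ∈ S, (1 - f i)),
      sq_nonneg (f a), mul_nonneg hx0 (sq_nonneg (∑ i ∈ S, f i))]

private lemma sum_icc_q (m : ℕ) : ∑ i ∈ Finset.Icc 1 m, (i : ℚ) = m * (m + 1) / 2 := by
  induction m with
  | zero => simp
  | succ n ih =>
    rw [Finset.sum_Icc_succ_top (by omega), ih]
    push_cast
    ring

/-- Key chain of estimates for `H₁(r,s)`: under `s ≥ 2`, `r ≥ s`, `rs < K`,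
`K > r + s` and positivity of `8K² − 4(2r+s)(s−1)K`, the ratio
`(r+s−1)/r · (K−1)⋯(K−(s−1)) / ((K−(r+1))⋯(K−(r+s−1)))` is bounded above by
`(r+s−1)/r · (1 + (8r(s−1)K + s²(s−1)²)/(8K² − 4(2r+s)(s−1)K))`. -/
theorem ratio_product_bound (K r s : ℕ) (hs : 2 ≤ s) (hrs : s ≤ r)
    (hKrs : r * s < K) (hK : r + s < K)
    (hden : 0 < 8 * (K : ℚ) ^ 2 - 4 * (2 * r + s) * ((s : ℚ) - 1) * K) :
    (((r : ℚ) + s - 1) / r) *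
        ((∏ i ∈ Finset.Icc 1 (s - 1), ((K : ℚ) - i)) /
          (∏ i ∈ Finset.Icc 1 (s - 1), ((K : ℚ) - (r + i)))) ≤
      (((r : ℚ) + s - 1) / r) *
        (1 + (8 * r * ((s : ℚ) - 1) * K + s ^ 2 * ((s : ℚ) - 1) ^ 2) /
          (8 * (K : ℚ) ^ 2 - 4 * (2 * r + s) * ((s : ℚ) - 1) * K)) := by
  have hKn : 0 < K := by omega
  have hK0 : (0 : ℚ) < K := by exact_mod_cast hKn
  have hKne : (K : ℚ) ≠ 0 := ne_of_gt hK0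
  set m := s - 1 with hm
  have hsm : (s : ℚ) = (m : ℚ) + 1 := by
    have : m + 1 = s := by omega
    exact_mod_cast (congrArg (Nat.cast (R := ℚ)) this).symm
  rw [hsm] at hden ⊢
  -- sums
  have hsumA : ∑ i ∈ Finset.Icc 1 m, (i : ℚ) / K = ((m : ℚ) * (m + 1) / 2) / K := by
    rw [← Finset.sum_div, sum_icc_q]
  have hsumB : ∑ i ∈ Finset.Icc 1 m, ((K : ℚ) - (r + i)) / K = ∑ i ∈ Finset.Icc 1 m, ((K : ℚ) - (r + i)) / K := rfl
  have hsumB' : ∑ i ∈ Finset.Icc 1 m, ((r : ℚ) + i) / K = (((m : ℚ) * r + m * (m + 1) / 2)) / K := by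
    rw [← Finset.sum_div, Finset.sum_add_distrib, Finset.sum_const, sum_icc_q,
      Nat.card_Icc]
    simp only [Nat.add_sub_cancel, nsmul_eq_mul]
  -- product rewrites
  have hprodP : ∏ i ∈ Finset.Icc 1 m, ((K : ℚ) - i)
      = (K : ℚ) ^ m * ∏ i ∈ Finset.Icc 1 m, (1 - (i : ℚ) / K) := by
    have hc : (K : ℚ) ^ m = ∏ _i ∈ Finset.Icc 1 m, (K : ℚ) := by
      rw [Finset.prod_const, Nat.card_Icc, Nat.add_sub_cancel]
    rw [hc, ← Finset.prod_mul_distrib]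
    refine Finset.prod_congr rfl fun i hi => ?_
    field_simp
  have hprodQ : ∏ i ∈ Finset.Icc 1 m, ((K : ℚ) - (r + i))
      = (K : ℚ) ^ m * ∏ i ∈ Finset.Icc 1 m, (1 - ((r : ℚ) + i) / K) := by
    have hc : (K : ℚ) ^ m = ∏ _i ∈ Finset.Icc 1 m, (K : ℚ) := by
      rw [Finset.prod_const, Nat.card_Icc, Nat.add_sub_cancel]
    rw [hc, ← Finset.prod_mul_distrib]
    refine Finset.prod_congr rfl fun i hi => ?_
    field_simp
  -- bounds on factors
  have hb1 : ∀ i ∈ Finset.Icc 1 m, 0 ≤ (i : ℚ) / K := fun i _ => by positivity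
  have hb2 : ∀ i ∈ Finset.Icc 1 m, (i : ℚ) / K ≤ 1 := by
    intro i hi
    rw [Finset.mem_Icc] at hi
    rw [div_le_one hK0]
    have : i ≤ K := by omega
    exact_mod_cast this
  have hb3 : ∀ i ∈ Finset.Icc 1 m, 0 ≤ ((r : ℚ) + i) / K := fun i _ => by positivity
  have hb4 : ∀ i ∈ Finset.Icc 1 m, ((r : ℚ) + i) / K ≤ 1 := by
    intro i hi
    rw [Finset.mem_Icc] at hi
    rw [div_le_one hK0]
    have : r + i ≤ K := by omega
    have h' : ((r + i : ℕ) : ℚ) ≤ K := by exact_mod_cast this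
    push_cast at h'
    linarith
  have hA := aux_ub (Finset.Icc 1 m) (fun i => (i : ℚ) / K) hb1 hb2
  have hB := aux_lb (Finset.Icc 1 m) (fun i => ((r : ℚ) + i) / K) hb3 hb4
  simp only [hsumA] at hA
  simp only [hsumB'] at hB
  -- positivity of the lower bound on Q-side
  have hKb : (m : ℚ) * r + (m : ℚ) * (m + 1) / 2 < K := by nlinarith [hden, hK0]
  have htB : 0 < 1 - ((m : ℚ) * r + (m : ℚ) * (m + 1) / 2) / K := by
    rw [sub_pos, div_lt_one hK0]; exact hKb
  have hQn : 0 < ∏ i ∈ Finset.Icc 1 m, (1 - ((r : ℚ) + i) / K) := lt_of_lt_of_le htB hB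
  have hKm : (0 : ℚ) < (K : ℚ) ^ m := by positivity
  set tA : ℚ := ((m : ℚ) * (m + 1) / 2) / K with htAdef
  set tB : ℚ := ((m : ℚ) * r + (m : ℚ) * (m + 1) / 2) / K with htBdef
  have hstep : (∏ i ∈ Finset.Icc 1 m, ((K : ℚ) - i)) /
      (∏ i ∈ Finset.Icc 1 m, ((K : ℚ) - (r + i)))
      ≤ ((K : ℚ) ^ m * (1 - tA + tA ^ 2 / 2)) / ((K : ℚ) ^ m * (1 - tB)) := by
    rw [hprodP, hprodQ]
    apply div_le_div₀
    · nlinarith [sq_nonneg (tA - 1), hKm]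
    · exact mul_le_mul_of_nonneg_left hA (le_of_lt hKm)
    · exact mul_pos hKm htB
    · exact mul_le_mul_of_nonneg_left hB (le_of_lt hKm)
  have heq : ((K : ℚ) ^ m * (1 - tA + tA ^ 2 / 2)) / ((K : ℚ) ^ m * (1 - tB))
      = 1 + (8 * r * (((m : ℚ) + 1) - 1) * K + ((m : ℚ) + 1) ^ 2 * (((m : ℚ) + 1) - 1) ^ 2)
          / (8 * (K : ℚ) ^ 2 - 4 * (2 * r + ((m : ℚ) + 1)) * (((m : ℚ) + 1) - 1) * K) := by
    rw [mul_div_mul_left _ _ (ne_of_gt hKm)]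
    have hd2 : (8 * (K : ℚ) ^ 2 - 4 * (2 * r + ((m : ℚ) + 1)) * (((m : ℚ) + 1) - 1) * K) ≠ 0 :=
      ne_of_gt hden
    have hR : 1 + (8 * r * (((m : ℚ) + 1) - 1) * K + ((m : ℚ) + 1) ^ 2 * (((m : ℚ) + 1) - 1) ^ 2)
          / (8 * (K : ℚ) ^ 2 - 4 * (2 * r + ((m : ℚ) + 1)) * (((m : ℚ) + 1) - 1) * K)
        = ((8 * (K : ℚ) ^ 2 - 4 * (2 * r + ((m : ℚ) + 1)) * (((m : ℚ) + 1) - 1) * K)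
            + (8 * r * (((m : ℚ) + 1) - 1) * K + ((m : ℚ) + 1) ^ 2 * (((m : ℚ) + 1) - 1) ^ 2))
          / (8 * (K : ℚ) ^ 2 - 4 * (2 * r + ((m : ℚ) + 1)) * (((m : ℚ) + 1) - 1) * K) :=
      one_add_div hd2
    rw [hR, div_eq_div_iff htB.ne' hden.ne', htAdef, htBdef]
    field_simp
    ring
  have houter : (0 : ℚ) ≤ ((r : ℚ) + ((m : ℚ) + 1) - 1) / r := by
    have hr0 : (0 : ℚ) ≤ (r : ℚ) := by positivity
    have hm0 : (0 : ℚ) ≤ (m : ℚ) := by positivity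
    apply div_nonneg _ hr0
    linarith
  calc (((r : ℚ) + ((m : ℚ) + 1) - 1) / r) *
        ((∏ i ∈ Finset.Icc 1 m, ((K : ℚ) - i)) /
          (∏ i ∈ Finset.Icc 1 m, ((K : ℚ) - (r + i))))
      ≤ (((r : ℚ) + ((m : ℚ) + 1) - 1) / r) *
        (((K : ℚ) ^ m * (1 - tA + tA ^ 2 / 2)) / ((K : ℚ) ^ m * (1 - tB))) :=
        mul_le_mul_of_nonneg_left hstep houter
    _ = _ := by rw [heq]
end

section
/- Let K, r, s be positive integers with r ≥ s + 2 and K ≥ (111r − 15s − 111)·rs / (44r − 40s − 44). Then ((r+s−1)/(r−1)) · (1 + 9rs/(8K − 12rs)) ≤ 2.1, i.e., ≤ 21/10. -/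
/-- If `r ≥ s + 2` and `K ≥ (111r − 15s − 111)·rs/(44r − 40s − 44)`, then
`((r+s−1)/(r−1))·(1 + 9rs/(8K − 12rs)) ≤ 21/10`. -/
theorem ratio_bound_scheme2 (K r s : ℕ) (hK : 0 < K) (hs : 0 < s)
    (hrs : s + 2 ≤ r)
    (hbig : (K : ℚ) ≥
      (111 * r - 15 * s - 111) * r * s / (44 * (r : ℚ) - 40 * s - 44)) :
    (((r : ℚ) + s - 1) / ((r : ℚ) - 1)) *
      (1 + 9 * r * s / (8 * (K : ℚ) - 12 * r * s)) ≤ 21 / 10 := by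
  have hs1 : (1:ℚ) ≤ s := by exact_mod_cast hs
  have hr : (s:ℚ) + 2 ≤ r := by exact_mod_cast hrs
  have hd : (0:ℚ) < 44 * r - 40 * s - 44 := by linarith
  have hrs0 : (0:ℚ) < r * s := by nlinarith
  have hK1 : (111 * (r:ℚ) - 15 * s - 111) * r * s ≤ K * (44 * r - 40 * s - 44) := by
    rw [ge_iff_le, div_le_iff₀ hd] at hbig; linarith
  have hden : (0:ℚ) < 8 * K - 12 * r * s := by nlinarith
  have hr1 : (0:ℚ) < (r:ℚ) - 1 := by linarith
  rw [div_mul_eq_mul_div, div_le_div_iff₀ hr1 (by norm_num : (0:ℚ) < 10)]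
  have h1 : (1:ℚ) + 9 * r * s / (8 * K - 12 * r * s)
      = (8 * K - 3 * r * s) / (8 * K - 12 * r * s) := by
    rw [eq_div_iff hden.ne', add_mul, div_mul_cancel₀ _ hden.ne']; ring
  rw [h1, ← mul_div_assoc, div_mul_eq_mul_div, div_le_iff₀ hden]
  nlinarith
end

section
/- Let K, s, Q be positive integers with Q = K/gcd(K,s) and e = sQ/K (so e = s/gcd(K,s) is a positive integer). Assign to each node k ∈ {0,1,...,K−1} the set of output-function indices Q_k = {⟨ke⟩_Q, ⟨ke+1⟩_Q, ..., ⟨(k+1)e−1⟩_Q}, where ⟨a⟩_Q denotes the residue of a modulo Q. Then |Q_k| = e for every k, and every index q ∈ {0,1,...,Q−1} belongs to exactly s of the sets Q_0, ..., Q_{K−1}. -/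
/-- Assigning to node `k` the set of output-function indices
`Q_k = {⟨ke⟩_Q, …, ⟨(k+1)e−1⟩_Q}` with `Q = K/gcd(K,s)` and `e = sQ/K`,
each `Q_k` has exactly `e` elements and each index `q < Q` belongs to
exactly `s` of the sets `Q_0, …, Q_{K−1}`. -/
theorem output_function_assignment (K s Q e : ℕ) (hK : 0 < K) (hs : 0 < s)
    (hsK : s ≤ K) (hQ : Q = K / Nat.gcd K s) (he : e = s * Q / K) :
    (∀ k < K, ((Finset.range e).image (fun i => (k * e + i) % Q)).card = e) ∧
    (∀ q < Q, ((Finset.range K).filter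
        (fun k => q ∈ (Finset.range e).image (fun i => (k * e + i) % Q))).card = s) := by
  set g := Nat.gcd K s with hg
  have hg0 : 0 < g := Nat.gcd_pos_of_pos_left s hK
  have hgK : g ∣ K := Nat.gcd_dvd_left K s
  have hgs : g ∣ s := Nat.gcd_dvd_right K s
  have hQK : Q * g = K := by rw [hQ]; exact Nat.div_mul_cancel hgK
  have he' : e = s / g := by
    rw [he, hQ, ← Nat.mul_div_assoc s hgK, Nat.div_div_eq_div_mul,
      Nat.mul_div_mul_right s g hK]
  have heg : e * g = s := by rw [he']; exact Nat.div_mul_cancel hgs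
  have he0 : 0 < e := by
    rcases Nat.eq_zero_or_pos e with h | h
    · rw [h, zero_mul] at heg; omega
    · exact h
  have hQ0 : 0 < Q := by
    rcases Nat.eq_zero_or_pos Q with h | h
    · rw [h, zero_mul] at hQK; omega
    · exact h
  have heQ : e ≤ Q := by
    have : e * g ≤ Q * g := by rw [heg, hQK]; exact hsK
    exact Nat.le_of_mul_le_mul_right this hg0
  have hKe : K * e = Q * s := by rw [← hQK, ← heg]; ring
  -- uniqueness of i with (k*e+i) % Q = given value, for i < e
  have huniq : ∀ k : ℕ, ∀ i < e, ∀ j < e, (k * e + i) % Q = (k * e + j) % Q → i = j := by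
    intro k i hi j hj h
    have h1 : i ≡ j [MOD Q] := Nat.ModEq.add_left_cancel' (k * e) h
    have h2 : i % Q = j % Q := h1
    rw [Nat.mod_eq_of_lt (lt_of_lt_of_le hi heQ), Nat.mod_eq_of_lt (lt_of_lt_of_le hj heQ)] at h2
    exact h2
  constructor
  · intro k _
    rw [Finset.card_image_of_injOn, Finset.card_range]
    intro i hi j hj h
    simp only [Finset.coe_range, Set.mem_Iio] at hi hj
    exact huniq k i hi j hj h
  · intro q hq
    -- step 1: card of filter = card of pair set
    have step1 : ((Finset.range K).filter
        (fun k => q ∈ (Finset.range e).image (fun i => (k * e + i) % Q))).card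
        = ((Finset.range K ×ˢ Finset.range e).filter
            (fun p => (p.1 * e + p.2) % Q = q)).card := by
      refine (Finset.card_bij (fun p _ => p.1) ?_ ?_ ?_).symm
      · intro p hp
        simp only [Finset.mem_filter, Finset.mem_product, Finset.mem_range] at hp ⊢
        exact ⟨hp.1.1, Finset.mem_image.mpr ⟨p.2, Finset.mem_range.mpr hp.1.2, hp.2⟩⟩
      · intro p1 hp1 p2 hp2 hfst
        have hf : p1.1 = p2.1 := hfst
        simp only [Finset.mem_filter, Finset.mem_product, Finset.mem_range] at hp1 hp2
        have h2 : p1.2 = p2.2 := by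
          apply huniq p1.1 p1.2 hp1.1.2 p2.2 hp2.1.2
          rw [hp1.2, hf, hp2.2]
        exact Prod.ext hf h2
      · intro k hk
        simp only [Finset.mem_filter, Finset.mem_range, Finset.mem_image] at hk
        obtain ⟨hk1, i, hi, hik⟩ := hk
        exact ⟨(k, i), Finset.mem_filter.mpr ⟨Finset.mem_product.mpr
          ⟨Finset.mem_range.mpr hk1, Finset.mem_range.mpr hi⟩, hik⟩, rfl⟩
    -- step 2: pair set ↔ {n < Q*s : n % Q = q}
    have step2 : ((Finset.range K ×ˢ Finset.range e).filter
        (fun p => (p.1 * e + p.2) % Q = q)).card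
        = ((Finset.range (Q * s)).filter (fun n => n % Q = q)).card := by
      refine Finset.card_nbij' (fun p => p.1 * e + p.2) (fun n => (n / e, n % e)) ?_ ?_ ?_ ?_
      · intro p hp
        simp only [Finset.mem_coe, Finset.mem_filter, Finset.mem_product, Finset.mem_range] at hp ⊢
        refine ⟨?_, hp.2⟩
        have h1 : p.1 * e + p.2 < (p.1 + 1) * e := by
          have := hp.1.2; nlinarith
        have h2 : (p.1 + 1) * e ≤ K * e := Nat.mul_le_mul_right e hp.1.1
        omega
      · intro n hn
        simp only [Finset.mem_coe, Finset.mem_filter, Finset.mem_product, Finset.mem_range] at hn ⊢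
        have hde : n / e * e + n % e = n := Nat.div_add_mod' n e
        refine ⟨⟨?_, Nat.mod_lt n he0⟩, by rw [hde]; exact hn.2⟩
        have hlt : n < K * e := by rw [hKe]; exact hn.1
        exact Nat.div_lt_of_lt_mul (by rwa [mul_comm] at hlt)
      · intro p hp
        simp only [Finset.mem_coe, Finset.mem_filter, Finset.mem_product, Finset.mem_range] at hp
        have h1 : (p.1 * e + p.2) / e = p.1 := by
          rw [mul_comm, Nat.mul_add_div he0, Nat.div_eq_of_lt hp.1.2, add_zero]
        have h2 : (p.1 * e + p.2) % e = p.2 := by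
          rw [mul_comm, Nat.mul_add_mod, Nat.mod_eq_of_lt hp.1.2]
        exact Prod.ext h1 h2
      · intro n _
        exact Nat.div_add_mod' n e
    -- step 3: count residues
    have step3 : ((Finset.range (Q * s)).filter (fun n => n % Q = q)).card = s := by
      refine Eq.trans (Finset.card_nbij' (fun n => n / Q) (fun j => j * Q + q)
        ?_ ?_ ?_ ?_) (Finset.card_range s)
      · intro n hn
        simp only [Finset.mem_coe, Finset.mem_filter, Finset.mem_range] at hn ⊢
        exact Nat.div_lt_of_lt_mul hn.1
      · intro j hj
        simp only [Finset.mem_coe, Finset.mem_filter, Finset.mem_range] at hj ⊢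
        constructor
        · nlinarith
        · rw [mul_comm, Nat.mul_add_mod, Nat.mod_eq_of_lt hq]
      · intro n hn
        simp only [Finset.mem_coe, Finset.mem_filter, Finset.mem_range] at hn
        show n / Q * Q + q = n
        rw [← hn.2]
        exact Nat.div_add_mod' n Q
      · intro j _
        show (j * Q + q) / Q = j
        rw [mul_comm, Nat.mul_add_div hQ0, Nat.div_eq_of_lt hq, add_zero]
    rw [step1, step2, step3]
end

section
/- For positive integers K, r, s with r ≥ s, s ≥ 2, and K ≥ 3rs(7r−s+1)/(8(r−s+1)): the ratio H₁(r,s) = [(s/r)(1 − r/K)] / L*(r,s) satisfies H₁(r,s) ≤ 2, where L*(r,s) = Σ_{l = max{r+1,s}}^{min{r+s,K}} [C(K−r, l−r)·C(r, l−s)/C(K,s)]·(l−r)/(l−1). -/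
open Finset

/-- Key inductive product inequality. -/
lemma scheme1_aux_ind (K r s : ℕ) (hs : 2 ≤ s) (hrs : s ≤ r) (hKn : r + s + 1 ≤ K) :
    ∀ m, m ≤ s - 1 →
      (((K:ℚ) - r - s + 1) - m * r) * ∏ i ∈ Finset.range m, ((K:ℚ) - (i + 1))
        ≤ ((K:ℚ) - r - s + 1) * ∏ i ∈ Finset.range m, ((K:ℚ) - r - (i + 1)) := by
  have hsQ : (2:ℚ) ≤ s := by exact_mod_cast hs
  have hsrQ : (s:ℚ) ≤ r := by exact_mod_cast hrs
  have hKQ : (r:ℚ) + s + 1 ≤ K := by exact_mod_cast hKn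
  intro m
  induction m with
  | zero => intro _; simp
  | succ m ih =>
    intro hm
    have hm' : m ≤ s - 1 := le_trans (Nat.le_succ m) hm
    have hmQ : (m:ℚ) ≤ (s:ℚ) - 2 := by
      have : m + 2 ≤ s := by omega
      have := (Nat.cast_le (α := ℚ)).2 this
      push_cast at this; linarith
    have hP : 0 ≤ ∏ i ∈ Finset.range m, ((K:ℚ) - (i + 1)) := by
      apply Finset.prod_nonneg
      intro i hi
      have : (i:ℚ) ≤ (s:ℚ) - 2 := by
        have hi' : i + 2 ≤ s := by
          have := Finset.mem_range.1 hi; omega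
        have := (Nat.cast_le (α := ℚ)).2 hi'; push_cast at this; linarith
      linarith
    have hb : (0:ℚ) ≤ (K:ℚ) - r - (m + 1) := by linarith
    rw [Finset.prod_range_succ, Finset.prod_range_succ]
    push_cast
    set c : ℚ := (K:ℚ) - r - s + 1 with hc
    have hc0 : (0:ℚ) < c := by simp only [hc]; linarith
    have ih' := ih hm'
    push_cast at ih'
    have hQm : 0 ≤ ∏ i ∈ Finset.range m, ((K:ℚ) - r - (i + 1)) := by
      apply Finset.prod_nonneg
      intro i hi
      have hi' : i + 2 ≤ s := by have := Finset.mem_range.1 hi; omega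
      have : (i:ℚ) ≤ (s:ℚ) - 2 := by
        have := (Nat.cast_le (α := ℚ)).2 hi'; push_cast at this; linarith
      linarith
    rcases le_or_gt (c - ((m:ℚ) + 1) * r) 0 with hsign | hsign
    · have hRHS : 0 ≤ c * ((∏ i ∈ Finset.range m, ((K:ℚ) - r - (i + 1))) * ((K:ℚ) - r - (m + 1))) :=
        mul_nonneg hc0.le (mul_nonneg hQm hb)
      have hLHS : (c - ((m:ℚ) + 1) * r) * ((∏ i ∈ Finset.range m, ((K:ℚ) - (i + 1))) * ((K:ℚ) - (m + 1))) ≤ 0 := by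
        apply mul_nonpos_of_nonpos_of_nonneg hsign
        exact mul_nonneg hP (by linarith)
      linarith
    · have hstep : (c - ((m:ℚ) + 1) * r) * ((K:ℚ) - (m + 1)) ≤ (c - (m:ℚ) * r) * ((K:ℚ) - r - (m + 1)) := by
        have key : (0:ℚ) ≤ (r:ℚ) * ((r:ℚ) + (s:ℚ) - 2 - m + m * r) := by
          have h1 : (0:ℚ) ≤ (m:ℚ) * r := by positivity
          nlinarith
        have hc' : c = (K:ℚ) - r - s + 1 := hc
        nlinarith [key, hc']
      calc (c - ((m:ℚ) + 1) * r) * ((∏ i ∈ Finset.range m, ((K:ℚ) - (i + 1))) * ((K:ℚ) - (m + 1)))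
          = ((c - ((m:ℚ) + 1) * r) * ((K:ℚ) - (m + 1))) * ∏ i ∈ Finset.range m, ((K:ℚ) - (i + 1)) := by ring
        _ ≤ ((c - (m:ℚ) * r) * ((K:ℚ) - r - (m + 1))) * ∏ i ∈ Finset.range m, ((K:ℚ) - (i + 1)) :=
            mul_le_mul_of_nonneg_right hstep hP
        _ = ((c - (m:ℚ) * r) * ∏ i ∈ Finset.range m, ((K:ℚ) - (i + 1))) * ((K:ℚ) - r - (m + 1)) := by ring
        _ ≤ (c * ∏ i ∈ Finset.range m, ((K:ℚ) - r - (i + 1))) * ((K:ℚ) - r - (m + 1)) :=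
            mul_le_mul_of_nonneg_right ih' hb
        _ = c * ((∏ i ∈ Finset.range m, ((K:ℚ) - r - (i + 1))) * ((K:ℚ) - r - (m + 1))) := by ring

set_option maxHeartbeats 1000000

/-- For `r ≥ s ≥ 2` and `K ≥ 3rs(7r−s+1)/(8(r−s+1))`, the ratio
`H₁(r,s) = [(s/r)(1 − r/K)] / L*(r,s)` of the communication load of Scheme 1
to the optimal load `L*(r,s)` of Li et al. is at most `2`. -/
theorem scheme1_ratio_le_two (K r s : ℕ) (hK : 0 < K) (hs : 2 ≤ s)
    (hrs : s ≤ r)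
    (hbig : (K : ℚ) ≥ 3 * r * s * (7 * r - s + 1) / (8 * ((r : ℚ) - s + 1))) :
    (((s : ℚ) / r) * (1 - (r : ℚ) / K)) /
      (∑ l ∈ Finset.Icc (max (r + 1) s) (min (r + s) K),
        ((Nat.choose (K - r) (l - r) * Nat.choose r (l - s) : ℚ) /
          (Nat.choose K s : ℚ)) * (((l : ℚ) - r) / ((l : ℚ) - 1))) ≤ 2 := by
  have hsQ : (2:ℚ) ≤ s := by exact_mod_cast hs
  have hsrQ : (s:ℚ) ≤ r := by exact_mod_cast hrs
  have hrQ : (2:ℚ) ≤ r := le_trans hsQ hsrQ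
  have hds : (0:ℚ) < (r:ℚ) - s + 1 := by linarith
  -- cleared form of the hypothesis
  have h8 : 3 * (r:ℚ) * s * (7 * r - s + 1) ≤ (K:ℚ) * (8 * ((r:ℚ) - s + 1)) := by
    rw [ge_iff_le, div_le_iff₀ (by linarith)] at hbig
    linarith
  have hKc : 2 * (r:ℚ)^2 * ((s:ℚ) - 1) + ((r:ℚ) + s - 1) * ((r:ℚ) - s + 1)
      ≤ (K:ℚ) * ((r:ℚ) - s + 1) := by
    nlinarith [mul_nonneg (mul_nonneg (by linarith : (0:ℚ) ≤ (r:ℚ)) (by linarith : (0:ℚ) ≤ (s:ℚ))) (by linarith : (0:ℚ) ≤ (r:ℚ) - s), sq_nonneg ((s:ℚ) - 1), sq_nonneg ((r:ℚ))]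
  have hcmp0 : ((r:ℚ) + s - 1) * ((K:ℚ) - r - s + 1)
      ≤ 2 * r * (((K:ℚ) - r - s + 1) - ((s:ℚ) - 1) * r) := by nlinarith [hKc]
  have hKQ : (r:ℚ) + s + 1 ≤ K := by
    nlinarith [hKc, sq_nonneg ((r:ℚ) - 1)]
  have hKn : r + s + 1 ≤ K := by exact_mod_cast hKQ
  -- rewrite the index set
  have hmax : max (r + 1) s = r + 1 := max_eq_left (by omega)
  have hmin : min (r + s) K = r + s := min_eq_left (by omega)
  rw [hmax, hmin]
  set f : ℕ → ℚ := fun l =>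
    ((Nat.choose (K - r) (l - r) * Nat.choose r (l - s) : ℚ) /
      (Nat.choose K s : ℚ)) * (((l : ℚ) - r) / ((l : ℚ) - 1)) with hf
  have hnonneg : ∀ i ∈ Finset.Icc (r + 1) (r + s), 0 ≤ f i := by
    intro i hi
    rw [Finset.mem_Icc] at hi
    have h1 : (r:ℚ) + 1 ≤ i := by exact_mod_cast hi.1
    apply mul_nonneg
    · apply div_nonneg (by positivity) (by positivity)
    · apply div_nonneg (by linarith) (by linarith)
  have hmem : r + s ∈ Finset.Icc (r + 1) (r + s) := by
    rw [Finset.mem_Icc]; omega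
  have hTle : f (r + s) ≤ ∑ l ∈ Finset.Icc (r + 1) (r + s), f l :=
    Finset.single_le_sum hnonneg hmem
  -- compute f (r+s)
  have hfv : f (r + s) = ((Nat.choose (K - r) s : ℚ) / (Nat.choose K s : ℚ)) *
      ((s:ℚ) / ((r:ℚ) + s - 1)) := by
    simp only [hf]
    rw [Nat.add_sub_cancel_left, Nat.add_sub_cancel, Nat.choose_self]
    push_cast
    ring
  -- positivity of the binomials
  have hA0 : (0:ℚ) < (Nat.choose K s : ℚ) := by
    exact_mod_cast Nat.choose_pos (by omega : s ≤ K)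
  have hB0 : (0:ℚ) < (Nat.choose (K - r) s : ℚ) := by
    exact_mod_cast Nat.choose_pos (by omega : s ≤ K - r)
  have hT0 : 0 < f (r + s) := by
    rw [hfv]
    apply mul_pos (div_pos hB0 hA0)
    apply div_pos (by linarith) (by linarith)
  have hS0 : 0 < ∑ l ∈ Finset.Icc (r + 1) (r + s), f l := lt_of_lt_of_le hT0 hTle
  -- the factorial identities
  have hcastKr : ((K - r : ℕ) : ℚ) = (K:ℚ) - r := by
    have : r ≤ K := by omega
    push_cast [this]; ring
  have hPA : (Nat.factorial s : ℚ) * (Nat.choose K s : ℚ) = ∏ i ∈ Finset.range s, ((K:ℚ) - i) := by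
    have h1 : (Nat.descFactorial K s : ℚ) = (Nat.factorial s : ℚ) * (Nat.choose K s : ℚ) := by
      exact_mod_cast congrArg (Nat.cast (R := ℚ)) (Nat.descFactorial_eq_factorial_mul_choose K s)
    rw [← h1, Nat.descFactorial_eq_prod_range]
    push_cast
    apply Finset.prod_congr rfl
    intro i hi
    have : i ≤ K := by have := Finset.mem_range.1 hi; omega
    push_cast [this]; ring
  have hQB : (Nat.factorial s : ℚ) * (Nat.choose (K - r) s : ℚ) = ∏ i ∈ Finset.range s, ((K:ℚ) - r - i) := by
    have h1 : (Nat.descFactorial (K - r) s : ℚ) = (Nat.factorial s : ℚ) * (Nat.choose (K - r) s : ℚ) := by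
      exact_mod_cast congrArg (Nat.cast (R := ℚ)) (Nat.descFactorial_eq_factorial_mul_choose (K - r) s)
    rw [← h1, Nat.descFactorial_eq_prod_range]
    push_cast
    apply Finset.prod_congr rfl
    intro i hi
    have h2 : i ≤ K - r := by have := Finset.mem_range.1 hi; omega
    have h3 : r ≤ K := by omega
    push_cast [h2, h3]; ring
  -- core product inequality
  obtain ⟨t, ht⟩ : ∃ t, s = t + 1 := ⟨s - 1, by omega⟩
  have hprodP : ∏ i ∈ Finset.range s, ((K:ℚ) - i) =
      (∏ i ∈ Finset.range t, ((K:ℚ) - (i + 1))) * K := by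
    rw [ht, Finset.prod_range_succ']
    push_cast
    norm_num
  have hprodQ : ∏ i ∈ Finset.range s, ((K:ℚ) - r - i) =
      (∏ i ∈ Finset.range t, ((K:ℚ) - r - (i + 1))) * ((K:ℚ) - r) := by
    rw [ht, Finset.prod_range_succ']
    push_cast
    norm_num
  set P : ℚ := ∏ i ∈ Finset.range t, ((K:ℚ) - (i + 1)) with hPdef
  set Q : ℚ := ∏ i ∈ Finset.range t, ((K:ℚ) - r - (i + 1)) with hQdef
  set c : ℚ := (K:ℚ) - r - s + 1 with hcdef
  have hc0 : (0:ℚ) < c := by simp only [hcdef]; linarith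
  have hind := scheme1_aux_ind K r s hs hrs hKn t (by omega)
  have htQ : (t:ℚ) = (s:ℚ) - 1 := by
    have : (t:ℚ) + 1 = s := by exact_mod_cast ht.symm
    linarith
  rw [htQ] at hind
  -- hind : (c - (s-1) * r) * P ≤ c * Q
  have hcmp : ((r:ℚ) + s - 1) * c ≤ 2 * r * (c - ((s:ℚ) - 1) * r) := hcmp0
  have hP0 : (0:ℚ) ≤ P := by
    apply Finset.prod_nonneg
    intro i hi
    have hi' : i + 1 ≤ s := by have := Finset.mem_range.1 hi; omega
    have : (i:ℚ) + 1 ≤ s := by exact_mod_cast hi'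
    linarith
  have hQ0 : (0:ℚ) ≤ Q := by
    apply Finset.prod_nonneg
    intro i hi
    have hi' : i + 1 ≤ s := by have := Finset.mem_range.1 hi; omega
    have : (i:ℚ) + 1 ≤ s := by exact_mod_cast hi'
    linarith
  have hcore : ((r:ℚ) + s - 1) * P ≤ 2 * r * Q := by
    have h1 : c * (((r:ℚ) + s - 1) * P) ≤ c * (2 * r * Q) := by
      calc c * (((r:ℚ) + s - 1) * P) = (((r:ℚ) + s - 1) * c) * P := by ring
        _ ≤ (2 * r * (c - ((s:ℚ) - 1) * r)) * P := mul_le_mul_of_nonneg_right hcmp hP0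
        _ = 2 * r * ((c - ((s:ℚ) - 1) * r) * P) := by ring
        _ ≤ 2 * r * (c * Q) := by
            apply mul_le_mul_of_nonneg_left hind (by linarith)
        _ = c * (2 * r * Q) := by ring
    exact le_of_mul_le_mul_left h1 hc0
  -- key binomial inequality
  have hkey : ((K:ℚ) - r) * ((r:ℚ) + s - 1) * (Nat.choose K s : ℚ)
      ≤ 2 * r * K * (Nat.choose (K - r) s : ℚ) := by
    have hF0 : (0:ℚ) < (Nat.factorial s : ℚ) := by
      exact_mod_cast Nat.factorial_pos s
    have hKr0 : (0:ℚ) ≤ (K:ℚ) - r := by linarith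
    have hK0 : (0:ℚ) ≤ (K:ℚ) := by positivity
    have hscaled := mul_le_mul_of_nonneg_right hcore (mul_nonneg hK0 hKr0)
    have h1 : (Nat.factorial s : ℚ) * (((K:ℚ) - r) * ((r:ℚ) + s - 1) * (Nat.choose K s : ℚ))
        ≤ (Nat.factorial s : ℚ) * (2 * r * K * (Nat.choose (K - r) s : ℚ)) := by
      calc (Nat.factorial s : ℚ) * (((K:ℚ) - r) * ((r:ℚ) + s - 1) * (Nat.choose K s : ℚ))
          = ((K:ℚ) - r) * ((r:ℚ) + s - 1) * ((Nat.factorial s : ℚ) * (Nat.choose K s : ℚ)) := by ring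
        _ = ((K:ℚ) - r) * ((r:ℚ) + s - 1) * (P * K) := by rw [hPA, hprodP]
        _ = ((r:ℚ) + s - 1) * P * ((K:ℚ) * ((K:ℚ) - r)) := by ring
        _ ≤ 2 * r * Q * ((K:ℚ) * ((K:ℚ) - r)) := hscaled
        _ = 2 * r * K * (Q * ((K:ℚ) - r)) := by ring
        _ = 2 * r * K * ((Nat.factorial s : ℚ) * (Nat.choose (K - r) s : ℚ)) := by rw [hQB, hprodQ]
        _ = (Nat.factorial s : ℚ) * (2 * r * K * (Nat.choose (K - r) s : ℚ)) := by ring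
    exact le_of_mul_le_mul_left h1 hF0
  -- finish
  rw [div_le_iff₀ hS0]
  have h2T : ((s : ℚ) / r) * (1 - (r : ℚ) / K) ≤ 2 * f (r + s) := by
    rw [hfv]
    have hKQ0 : (0:ℚ) < (K:ℚ) := by exact_mod_cast hK
    have hr0 : (0:ℚ) < (r:ℚ) := by linarith
    have hs0 : (0:ℚ) ≤ (s:ℚ) := by linarith
    have main : (s:ℚ) * (((K:ℚ) - r)) * ((Nat.choose K s : ℚ) * (((r:ℚ) + s - 1)))
        ≤ (2 * (Nat.choose (K - r) s : ℚ) * s) * ((r:ℚ) * K) := by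
      calc (s:ℚ) * (((K:ℚ) - r)) * ((Nat.choose K s : ℚ) * (((r:ℚ) + s - 1)))
          = (s:ℚ) * (((K:ℚ) - r) * ((r:ℚ) + s - 1) * (Nat.choose K s : ℚ)) := by ring
        _ ≤ (s:ℚ) * (2 * r * K * (Nat.choose (K - r) s : ℚ)) := mul_le_mul_of_nonneg_left hkey hs0
        _ = (2 * (Nat.choose (K - r) s : ℚ) * s) * ((r:ℚ) * K) := by ring
    have lhs_eq : ((s : ℚ) / r) * (1 - (r : ℚ) / K) = ((s:ℚ) * ((K:ℚ) - r)) / ((r:ℚ) * K) := by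
      field_simp
    have rhs_eq : 2 * (((Nat.choose (K - r) s : ℚ)) / (Nat.choose K s : ℚ) * ((s:ℚ) / ((r:ℚ) + s - 1)))
        = 2 * ((Nat.choose (K - r) s : ℚ) * s) / ((Nat.choose K s : ℚ) * ((r:ℚ) + s - 1)) := by
      rw [div_mul_div_comm]
      ring
    rw [lhs_eq, rhs_eq, div_le_div_iff₀ (mul_pos hr0 hKQ0) (mul_pos hA0 (by linarith))]
    linarith [main]
  calc ((s : ℚ) / r) * (1 - (r : ℚ) / K) ≤ 2 * f (r + s) := h2T
    _ ≤ 2 * ∑ l ∈ Finset.Icc (r + 1) (r + s), f l := by linarith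
end
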